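/- FBS objective linear rate: let φ = f + g with f ∈ F^{1,1}_L and g ∈ Γ₀(ℝⁿ) achieve its minimum, and suppose on Ω = {φ ≤ min φ + ε} the condition ⟨R(x), x − x_p⟩ ≥ ν·d(x, Argmin φ)² holds for the projection x_p of x onto Argmin φ, where R(x) = L(x − prox_{(1/L)g}(x − (1/L)∇f(x))) and ν < 2L. Then the forward–backward iterates x_{k+1} = x_k − (1/L)R(x_k) started in Ω satisfy φ(x_{k+1}) − min φ ≤ (1 − ν/(2L))·(φ(x_k) − min φ) for all k. -/

import Mathlib

open scoped RealInnerProductSpace Topology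
open Set


section Helpers

variable {E : Type*} [NormedAddCommGroup E] [InnerProductSpace ℝ E] [CompleteSpace E]

lemma lineDeriv' (f : E → ℝ) (f' : E → E) (hf : ∀ z, HasGradientAt f (f' z) z)
    (x v : E) (t : ℝ) :
    HasDerivAt (fun s : ℝ => f (x + s • v)) ⟪f' (x + t • v), v⟫ t := by
  have h1 : HasDerivAt (fun s : ℝ => x + s • v) v t := by
    simpa using ((hasDerivAt_id t).smul_const v).const_add x
  have h2 := (hf (x + t • v)).hasFDerivAt.comp_hasDerivAt t h1
  exact h2

lemma grad_convex_lb (f : E → ℝ) (f' : E → E) (hf : ∀ z, HasGradientAt f (f' z) z)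
    (hconv : ConvexOn ℝ Set.univ f) (x y : E) : f y + ⟪f' y, x - y⟫ ≤ f x := by
  set ψ : ℝ → ℝ := fun t => f (y + t • (x - y)) with hψ
  have hψ0 : ψ 0 = f y := by simp [hψ]
  have hψ1 : ψ 1 = f x := by simp [hψ]
  have hd : HasDerivAt ψ ⟪f' y, x - y⟫ 0 := by
    have := lineDeriv' f f' hf y (x - y) 0
    simpa using this
  have htend := hasDerivAt_iff_tendsto_slope.mp hd
  have hle : 𝓝[>] (0:ℝ) ≤ 𝓝[≠] (0:ℝ) :=
    nhdsWithin_mono 0 (fun t ht => ne_of_gt ht)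
  have hbound : ∀ t ∈ Set.Ioc (0:ℝ) 1, slope ψ 0 t ≤ f x - f y := by
    intro t ht
    have hconvt := hconv.2 (Set.mem_univ y) (Set.mem_univ x)
      (by linarith [ht.2] : (0:ℝ) ≤ 1 - t) ht.1.le (by ring)
    have heq : (1 - t) • y + t • x = y + t • (x - y) := by module
    rw [heq] at hconvt
    rw [smul_eq_mul, smul_eq_mul] at hconvt
    have hψt : ψ t ≤ f y + t * (f x - f y) := by rw [hψ]; dsimp only; linarith [hconvt]
    rw [slope_def_field, sub_zero, div_le_iff₀ ht.1]
    rw [hψ0]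
    linarith
  have hev : ∀ᶠ t in 𝓝[>] (0:ℝ), slope ψ 0 t ≤ f x - f y :=
    Filter.eventually_of_mem (Ioc_mem_nhdsGT_of_mem ⟨le_refl 0, zero_lt_one⟩) hbound
  have := le_of_tendsto (htend.mono_left hle) hev
  linarith

lemma convex_of_monotone_grad (q : E → ℝ) (q' : E → E) (hq : ∀ z, HasGradientAt q (q' z) z)
    (hmono : ∀ z w, 0 ≤ ⟪q' z - q' w, z - w⟫) : ConvexOn ℝ Set.univ q := by
  refine ⟨convex_univ, ?_⟩
  intro a _ b _ s t hs ht hst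
  have hs' : s = 1 - t := by linarith
  subst hs'
  set v := b - a with hv
  set ψ : ℝ → ℝ := fun u => q (a + u • v) with hψ
  have hψd : ∀ u, HasDerivAt ψ ⟪q' (a + u • v), v⟫ u := fun u => lineDeriv' q q' hq a v u
  have hdiff : Differentiable ℝ ψ := fun u => (hψd u).differentiableAt
  have hderiv : deriv ψ = fun u => ⟪q' (a + u • v), v⟫ := funext fun u => (hψd u).deriv
  have hmono' : Monotone (deriv ψ) := by
    rw [hderiv]
    intro u₁ u₂ h
    have h1 := hmono (a + u₂ • v) (a + u₁ • v)
    have heq : (a + u₂ • v) - (a + u₁ • v) = (u₂ - u₁) • v := by module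
    rw [heq, inner_smul_right, inner_sub_left] at h1
    rcases eq_or_lt_of_le h with rfl | hlt
    · exact le_refl _
    · nlinarith [h1, sub_pos.mpr hlt]
  have hcψ := hmono'.convexOn_univ_of_deriv hdiff
  have h2 := hcψ.2 (Set.mem_univ (0:ℝ)) (Set.mem_univ (1:ℝ)) (by linarith : (0:ℝ) ≤ 1 - t) ht hst
  have he1 : (1 - t) • (0:ℝ) + t • (1:ℝ) = t := by simp
  rw [he1] at h2
  have he2 : a + t • v = (1 - t) • a + t • b := by rw [hv]; module
  have hψt : ψ t = q ((1 - t) • a + t • b) := by rw [hψ]; dsimp only; rw [he2]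
  have hψ0 : ψ 0 = q a := by simp [hψ]
  have hψ1 : ψ 1 = q b := by simp [hψ, hv]
  rw [hψt, hψ0, hψ1] at h2
  simpa using h2

lemma hasGradientAt_const_mul_normsq (c : ℝ) (z : E) :
    HasGradientAt (fun w : E => c * ‖w‖ ^ 2) ((2 * c) • z) z := by
  rw [hasGradientAt_iff_hasFDerivAt]
  have h1 : HasFDerivAt (fun w : E => (⟪w, w⟫ : ℝ))
      ((fderivInnerCLM ℝ (z, z)).comp ((ContinuousLinearMap.id ℝ E).prod
        (ContinuousLinearMap.id ℝ E))) z :=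
    (hasFDerivAt_id z).inner ℝ (hasFDerivAt_id z)
  have h2 := h1.const_mul c
  have heq : (fun w : E => c * ‖w‖ ^ 2) = fun w : E => c * ⟪w, w⟫ := by
    funext w; rw [real_inner_self_eq_norm_sq]
  rw [heq]
  convert h2 using 1
  · rfl
  ext v
  simp [fderivInnerCLM_apply, real_inner_smul_left, real_inner_comm]
  ring

lemma descent_lemma (f : E → ℝ) (f' : E → E) (hf : ∀ z, HasGradientAt f (f' z) z)
    (L : ℝ) (hL : 0 < L) (hLip : ∀ x y, ‖f' x - f' y‖ ≤ L * ‖x - y‖) (z w : E) :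
    f z ≤ f w + ⟪f' w, z - w⟫ + L / 2 * ‖z - w‖ ^ 2 := by
  set q : E → ℝ := fun u => L / 2 * ‖u‖ ^ 2 - f u with hqdef
  set q' : E → E := fun u => L • u - f' u with hq'def
  have hq : ∀ u, HasGradientAt q (q' u) u := by
    intro u
    rw [hasGradientAt_iff_hasFDerivAt]
    have h1 := (hasGradientAt_const_mul_normsq (L/2) u).hasFDerivAt
    have h2 := (hf u).hasFDerivAt
    have h3 := h1.sub h2
    convert h3 using 1
    · rfl
    · rfl
    · rfl
    rw [hq'def]
    simp only [map_sub]
    rw [show (2 * (L/2)) = L from by ring]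
  have hmono : ∀ u v : E, 0 ≤ ⟪q' u - q' v, u - v⟫ := by
    intro u v
    have heq : q' u - q' v = L • (u - v) - (f' u - f' v) := by rw [hq'def]; module
    rw [heq, inner_sub_left, real_inner_smul_left, real_inner_self_eq_norm_sq]
    have h1 := real_inner_le_norm (f' u - f' v) (u - v)
    have h2 := hLip u v
    have h3 : (0:ℝ) ≤ ‖u - v‖ := norm_nonneg _
    nlinarith [norm_nonneg (f' u - f' v)]
  have hqconv := convex_of_monotone_grad q q' hq hmono
  have hkey := grad_convex_lb q q' hq hqconv z w
  rw [hqdef, hq'def] at hkey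
  simp only at hkey
  rw [inner_sub_left, real_inner_smul_left] at hkey
  have hexp : ‖z - w‖ ^ 2 = ‖z‖ ^ 2 - 2 * ⟪z, w⟫ + ‖w‖ ^ 2 := norm_sub_sq_real z w
  have hc : ⟪w, z - w⟫ = ⟪z, w⟫ - ‖w‖ ^ 2 := by
    rw [inner_sub_right, real_inner_self_eq_norm_sq, real_inner_comm]
  rw [hc] at hkey
  nlinarith [hkey, hexp]

lemma prox_subgrad (g : E → ℝ) (hgconv : ConvexOn ℝ Set.univ g) (L : ℝ) (hL : 0 < L)
    (u p : E) (hp : ∀ y, g p + L / 2 * ‖p - u‖ ^ 2 ≤ g y + L / 2 * ‖y - u‖ ^ 2) (z : E) :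
    g p + L * ⟪u - p, z - p⟫ ≤ g z := by
  set B : ℝ := L / 2 * ‖z - p‖ ^ 2 with hBdef
  have hB : 0 ≤ B := by positivity
  set C : ℝ := g z - g p + L * ⟪p - u, z - p⟫ with hCdef
  have hstep : ∀ t : ℝ, 0 < t → t ≤ 1 → 0 ≤ C + t * B := by
    intro t ht0 ht1
    have hconvt := hgconv.2 (Set.mem_univ p) (Set.mem_univ z)
      (by linarith : (0:ℝ) ≤ 1 - t) ht0.le (by ring)
    rw [smul_eq_mul, smul_eq_mul] at hconvt
    have hmin := hp ((1 - t) • p + t • z)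
    have hv : ((1 - t) • p + t • z) - u = (p - u) + t • (z - p) := by module
    rw [hv] at hmin
    have hns : ‖(p - u) + t • (z - p)‖ ^ 2
        = ‖p - u‖ ^ 2 + 2 * (t * ⟪p - u, z - p⟫) + t ^ 2 * ‖z - p‖ ^ 2 := by
      rw [norm_add_sq_real, real_inner_smul_right, norm_smul]
      rw [Real.norm_eq_abs, abs_of_pos ht0]
      ring
    rw [hns] at hmin
    have h4 : 0 ≤ t * (C + t * B) := by
      rw [hCdef, hBdef]
      nlinarith [hmin, hconvt]
    exact nonneg_of_mul_nonneg_right h4 ht0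
  have hC : 0 ≤ C := by
    by_contra hcon
    push_neg at hcon
    set t : ℝ := min 1 (-C / (2 * (B + 1))) with htdef
    have htpos : 0 < t := by
      apply lt_min one_pos
      apply div_pos (by linarith) (by linarith)
    have ht1 : t ≤ 1 := min_le_left _ _
    have ht2 : t ≤ -C / (2 * (B + 1)) := min_le_right _ _
    have h5 := hstep t htpos ht1
    have h6 : t * (B + 1) ≤ -C / 2 := by
      have hm := mul_le_mul_of_nonneg_right ht2 (by linarith : (0:ℝ) ≤ B + 1)
      have he : (-C / (2 * (B + 1))) * (B + 1) = -C / 2 := by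
        field_simp
      linarith [he ▸ hm]
    have h7 : t * B ≤ t * (B + 1) := by nlinarith
    linarith
  have : ⟪u - p, z - p⟫ = -⟪p - u, z - p⟫ := by
    rw [show u - p = -(p - u) from by abel, inner_neg_left]
  rw [this]
  linarith [hC]

lemma fbs_key (f g : E → ℝ) (f' : E → E)
    (hf : ∀ z, HasGradientAt f (f' z) z) (hfconv : ConvexOn ℝ Set.univ f)
    (L : ℝ) (hL : 0 < L) (hLip : ∀ x y, ‖f' x - f' y‖ ≤ L * ‖x - y‖)
    (hgconv : ConvexOn ℝ Set.univ g)
    (T : E → E)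
    (hT : ∀ x y, g (T x) + (L/2) * ‖T x - (x - (1/L) • f' x)‖^2
      ≤ g y + (L/2) * ‖y - (x - (1/L) • f' x)‖^2)
    (R : E → E) (hR : ∀ x, R x = L • (x - T x)) (x y : E) :
    f (T y) + g (T y) + 1/(2*L) * ‖R y‖^2 ≤ f x + g x + ⟪R y, y - x⟫ := by
  set u : E := y - (1/L) • f' y with hu
  set p : E := T y with hp
  set r : E := R y with hr
  have hLne : (L:ℝ) ≠ 0 := ne_of_gt hL
  have hpy : p - y = -((1/L) • r) := by
    rw [hr, hR y, smul_smul, one_div, inv_mul_cancel₀ hLne, one_smul, hp]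
    abel
  have hup : u - p = (1/L) • (r - f' y) := by
    have : r = L • (y - p) := by rw [hr, hR y, hp]
    rw [hu, smul_sub, this, smul_smul, one_div, inv_mul_cancel₀ hLne, one_smul]
    abel
  -- three inequalities
  have h1 : f y + ⟪f' y, x - y⟫ ≤ f x := grad_convex_lb f f' hf hfconv x y
  have h2 : f p ≤ f y + ⟪f' y, p - y⟫ + L / 2 * ‖p - y‖ ^ 2 :=
    descent_lemma f f' hf L hL hLip p y
  have h3 : g p + L * ⟪u - p, x - p⟫ ≤ g x := by
    apply prox_subgrad g hgconv L hL u p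
    intro z
    have := hT y z
    rw [← hu, ← hp] at this
    linarith [this]
  -- rewrite scalar quantities
  have e1 : ⟪f' y, p - y⟫ = -(1/L * ⟪f' y, r⟫) := by
    rw [hpy, inner_neg_right, real_inner_smul_right]
  have e2 : ‖p - y‖ ^ 2 = (1/L)^2 * ‖r‖ ^ 2 := by
    rw [hpy, norm_neg, norm_smul, Real.norm_eq_abs, mul_pow, sq_abs]
  have e3 : L * ⟪u - p, x - p⟫ = ⟪r, x - y⟫ + 1/L * ‖r‖^2 - ⟪f' y, x - y⟫ - 1/L * ⟪f' y, r⟫ := by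
    have hxp : x - p = (x - y) + (1/L) • r := by
      have := hpy
      rw [show x - p = (x - y) - (p - y) from by abel, this]
      abel
    rw [hup, hxp, real_inner_smul_left, inner_sub_left, inner_add_right, inner_add_right,
      real_inner_smul_right, real_inner_smul_right, real_inner_self_eq_norm_sq]
    field_simp
    ring
  have e4 : ⟪r, y - x⟫ = -⟪r, x - y⟫ := by
    rw [show y - x = -(x - y) from by abel, inner_neg_right]
  have e5 : L / 2 * ((1/L)^2 * ‖r‖^2) = 1/(2*L) * ‖r‖^2 := by
    field_simp
  rw [e4]
  rw [e1, e2, e5] at h2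
  rw [e3] at h3
  have e6 : 1/L * ‖r‖^2 = 2 * (1/(2*L) * ‖r‖^2) := by field_simp
  linarith [h1, h2, h3, e6]


end Helpers

set_option maxHeartbeats 1000000 in
/-- FBS objective linear rate. For `φ = f + g` with `f ∈ F^{1,1}_L`,
`g` convex lsc, the gradient mapping `R(x) = L(x − prox_{(1/L)g}(x − (1/L)∇f(x)))`,
and the (cor-EB) condition `⟨R(x), x − x_p⟩ ≥ ν·d(x, Argmin φ)²` on the sublevel set
`Ω = {φ ≤ min φ + ε}` with `ν < 2L`, the forward–backward iterates
`x_{k+1} = x_k − (1/L)R(x_k)` started in `Ω` satisfy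
`φ(x_{k+1}) − min φ ≤ (1 − ν/(2L))·(φ(x_k) − min φ)`. -/
theorem stmt13 {n : ℕ} (f g : EuclideanSpace ℝ (Fin n) → ℝ)
    (f' : EuclideanSpace ℝ (Fin n) → EuclideanSpace ℝ (Fin n))
    (hf : ∀ x, HasGradientAt f (f' x) x)
    (hfconv : ConvexOn ℝ Set.univ f)
    (L : ℝ) (hL : 0 < L)
    (hLip : ∀ x y, ‖f' x - f' y‖ ≤ L * ‖x - y‖)
    (hgconv : ConvexOn ℝ Set.univ g) (hglsc : LowerSemicontinuous g)
    (m : ℝ) (hm : ∀ x, m ≤ f x + g x) (hach : ∃ x, f x + g x = m)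
    (T : EuclideanSpace ℝ (Fin n) → EuclideanSpace ℝ (Fin n))
    (hT : ∀ x y, g (T x) + (L/2) * ‖T x - (x - (1/L) • f' x)‖^2
      ≤ g y + (L/2) * ‖y - (x - (1/L) • f' x)‖^2)
    (R : EuclideanSpace ℝ (Fin n) → EuclideanSpace ℝ (Fin n))
    (hR : ∀ x, R x = L • (x - T x))
    (ε : ℝ) (hε : 0 < ε)
    (ν : ℝ) (hν : 0 < ν) (hν2L : ν < 2*L)
    (hcor : ∀ x ∈ {z | f z + g z ≤ m + ε},
      ∀ xp ∈ {z | ∀ y, f z + g z ≤ f y + g y},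
      dist x xp = Metric.infDist x {z | ∀ y, f z + g z ≤ f y + g y} →
      ν * (Metric.infDist x {z | ∀ y, f z + g z ≤ f y + g y})^2 ≤ ⟪R x, x - xp⟫)
    (x : ℕ → EuclideanSpace ℝ (Fin n))
    (hx0 : x 0 ∈ {z | f z + g z ≤ m + ε})
    (hiter : ∀ k, x (k+1) = x k - (1/L) • R (x k)) :
    ∀ k, (f (x (k+1)) + g (x (k+1))) - m ≤ (1 - ν/(2*L)) * ((f (x k) + g (x k)) - m) := by
  have hLne : L ≠ 0 := ne_of_gt hL
  have key := fbs_key f g f' hf hfconv L hL hLip hgconv T hT R hR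
  have hstep : ∀ j, x (j+1) = T (x j) := by
    intro j
    rw [hiter j, hR (x j), smul_smul, one_div, inv_mul_cancel₀ hLne, one_smul, sub_sub_cancel]
  have hdescent : ∀ j, f (x (j+1)) + g (x (j+1)) + 1/(2*L) * ‖R (x j)‖^2
      ≤ f (x j) + g (x j) := by
    intro j
    have h := key (x j) (x j)
    rw [sub_self, inner_zero_right, add_zero] at h
    rw [hstep j]
    exact h
  have hmem : ∀ j, f (x j) + g (x j) ≤ m + ε := by
    intro j
    induction j with
    | zero => exact hx0
    | succ i ih =>
      have h1 := hdescent i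
      have h2 : (0:ℝ) ≤ 1/(2*L) * ‖R (x i)‖^2 := by positivity
      linarith
  obtain ⟨xs, hxs⟩ := hach
  set S : Set (EuclideanSpace ℝ (Fin n)) := {z | ∀ y, f z + g z ≤ f y + g y} with hSdef
  have hxsS : xs ∈ S := fun y => by rw [hxs]; exact hm y
  have hSne : S.Nonempty := ⟨xs, hxsS⟩
  have hfcont : Continuous f :=
    Differentiable.continuous (fun z => (hf z).differentiableAt)
  have hφlsc : LowerSemicontinuous (fun z : EuclideanSpace ℝ (Fin n) => f z + g z) :=
    (hfcont.lowerSemicontinuous).add hglsc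
  have hSeq2 : S = (fun z : EuclideanSpace ℝ (Fin n) => f z + g z) ⁻¹' Set.Iic m := by
    ext z
    constructor
    · intro hz
      have := hz xs
      rw [hxs] at this
      exact this
    · intro hz y
      exact le_trans hz (hm y)
  have hSclosed : IsClosed S := hSeq2 ▸ hφlsc.isClosed_preimage m
  intro k
  obtain ⟨xp, hxpS, hdisteq⟩ := hSclosed.exists_infDist_eq_dist hSne (x k)
  have hφxp : f xp + g xp = m := by
    refine le_antisymm ?_ (hm xp)
    have := hxpS xs
    rw [hxs] at this
    exact this
  set d : ℝ := Metric.infDist (x k) S with hd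
  have hd0 : 0 ≤ d := Metric.infDist_nonneg
  have hcor' : ν * d^2 ≤ ⟪R (x k), x k - xp⟫ := hcor (x k) (hmem k) xp hxpS hdisteq.symm
  have hkey2 : f (x (k+1)) + g (x (k+1)) + 1/(2*L) * ‖R (x k)‖^2
      ≤ m + ⟪R (x k), x k - xp⟫ := by
    have h := key xp (x k)
    rw [← hstep k, hφxp] at h
    -- h : f (T (x k)) + ... ≤ m + ⟪R (x k), x k - xp⟫ ; but we rewrote x (k+1) = T (x k)
    exact h
  have hCS : ⟪R (x k), x k - xp⟫ ≤ ‖R (x k)‖ * d := by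
    have h1 := real_inner_le_norm (R (x k)) (x k - xp)
    have h2 : ‖x k - xp‖ = d := by rw [← dist_eq_norm, hdisteq]
    rw [h2] at h1
    exact h1
  set s : ℝ := 1/(2*L) * ‖R (x k)‖^2 with hs
  have hs0 : 0 ≤ s := by positivity
  have hs2L : 2 * L * s = ‖R (x k)‖^2 := by rw [hs]; field_simp
  have hΔ'0 : 0 ≤ f (x (k+1)) + g (x (k+1)) - m := by linarith [hm (x (k+1))]
  have hΔ0 : 0 ≤ f (x k) + g (x k) - m := by linarith [hm (x k)]
  have hdn : f (x (k+1)) + g (x (k+1)) + s ≤ f (x k) + g (x k) := hdescent k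
  have hfrac : ν / (2*L) * (2*L) = ν := div_mul_cancel₀ ν (by linarith : (2:ℝ)*L ≠ 0)
  rcases eq_or_lt_of_le hd0 with hdeq | hdpos
  · -- d = 0 : x k = xp
    have hxk : x k = xp := by
      have : dist (x k) xp = 0 := by rw [← hdisteq]; exact hdeq.symm
      exact dist_eq_zero.mp this
    have : ⟪R (x k), x k - xp⟫ = 0 := by rw [hxk, sub_self, inner_zero_right]
    rw [this] at hkey2
    have hfac : 0 ≤ 1 - ν/(2*L) := by
      rw [sub_nonneg, div_le_one (by linarith : (0:ℝ) < 2*L)]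
      linarith
    nlinarith [mul_nonneg hfac hΔ0]
  · -- d > 0
    have hνd : ν * d ≤ ‖R (x k)‖ := by
      have h1 : ν * d * d ≤ ‖R (x k)‖ * d := by nlinarith [hcor', hCS]
      exact le_of_mul_le_mul_right h1 hdpos
    have h2 : ν * ⟪R (x k), x k - xp⟫ ≤ ‖R (x k)‖^2 := by
      calc ν * ⟪R (x k), x k - xp⟫ ≤ ν * (‖R (x k)‖ * d) := by
            exact mul_le_mul_of_nonneg_left hCS hν.le
        _ = ‖R (x k)‖ * (ν * d) := by ring
        _ ≤ ‖R (x k)‖ * ‖R (x k)‖ := mul_le_mul_of_nonneg_left hνd (norm_nonneg _)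
        _ = ‖R (x k)‖^2 := by ring
    -- ν * (Δ' + s) ≤ ν * (m + I) - ν m = ν I ≤ 2 L s
    have h3 : ν * (f (x (k+1)) + g (x (k+1)) - m + s) ≤ 2 * L * s := by
      have := mul_le_mul_of_nonneg_left hkey2 hν.le
      nlinarith [h2, hs2L]
    -- conclude
    have e1 : 0 ≤ (2*L - ν) * ((f (x k) + g (x k)) - (f (x (k+1)) + g (x (k+1)) + s)) :=
      mul_nonneg (by linarith) (by linarith [hdn])
    have h2Lpos : (0:ℝ) < 2*L := by linarith
    have hx2 : ((1 - ν/(2*L)) * (f (x k) + g (x k) - m)) * (2*L)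
        = (2*L - ν) * (f (x k) + g (x k) - m) := by field_simp
    have hmul : (f (x (k+1)) + g (x (k+1)) - m) * (2*L)
        ≤ ((1 - ν/(2*L)) * (f (x k) + g (x k) - m)) * (2*L) := by
      rw [hx2]
      nlinarith [e1, h3]
    exact le_of_mul_le_mul_right hmul h2Lpos
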